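/- Let F and G be GPT systems (each with tomographic probability rules), and suppose there exist GPT embeddings (ι₁, κ₁) : F → G and (ι₂, κ₂) : G → F (probability-preserving, unit-preserving pairs of state and effect maps). Then both embeddings are invertible, i.e., F and G are isomorphic as GPTs: ι₁ and ι₂ are bijections between the state spaces and κ₁, κ₂ are bijections between the effect spaces. -/
import Mathlib

open Set Filter

section ConeDecomp

variable {U : Type*} [AddCommGroup U] [Module ℝ U]

theorem cone_add' {S : Set U} (hconv : Convex ℝ S)
    {a b : ℝ} {s t : U} (ha : 0 ≤ a) (hb : 0 ≤ b) (hs : s ∈ S) (ht : t ∈ S) :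
    ∃ c : ℝ, 0 ≤ c ∧ ∃ u ∈ S, a • s + b • t = c • u := by
  rcases eq_or_lt_of_le (add_nonneg ha hb) with h | h
  · have ha0 : a = 0 := by linarith
    have hb0 : b = 0 := by linarith
    exact ⟨0, le_rfl, s, hs, by simp [ha0, hb0]⟩
  · refine ⟨a + b, h.le, (a / (a + b)) • s + (b / (a + b)) • t,
      hconv hs ht (div_nonneg ha h.le) (div_nonneg hb h.le) (by field_simp), ?_⟩
    rw [smul_add, smul_smul, smul_smul, mul_div_cancel₀ a h.ne', mul_div_cancel₀ b h.ne']

theorem span_decomp {S : Set U} (hconv : Convex ℝ S) (h0 : (0 : U) ∈ S) {x : U}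
    (hx : x ∈ Submodule.span ℝ S) :
    ∃ a b : ℝ, 0 ≤ a ∧ 0 ≤ b ∧ ∃ s ∈ S, ∃ t ∈ S, x = a • s - b • t := by
  let W : Submodule ℝ U :=
    { carrier := {x | ∃ a b : ℝ, 0 ≤ a ∧ 0 ≤ b ∧ ∃ s ∈ S, ∃ t ∈ S, x = a • s - b • t}
      zero_mem' := ⟨0, 0, le_rfl, le_rfl, 0, h0, 0, h0, by simp⟩
      add_mem' := by
        rintro x y ⟨a, b, ha, hb, s, hs, t, ht, rfl⟩ ⟨a', b', ha', hb', s', hs', t', ht', rfl⟩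
        obtain ⟨c, hc, u, hu, hcu⟩ := cone_add' hconv ha ha' hs hs'
        obtain ⟨d, hd, v, hv, hdv⟩ := cone_add' hconv hb hb' ht ht'
        exact ⟨c, d, hc, hd, u, hu, v, hv, by rw [← hcu, ← hdv]; abel⟩
      smul_mem' := by
        rintro r x ⟨a, b, ha, hb, s, hs, t, ht, rfl⟩
        rcases le_total 0 r with hr | hr
        · exact ⟨r * a, r * b, mul_nonneg hr ha, mul_nonneg hr hb, s, hs, t, ht, by
            rw [smul_sub, smul_smul, smul_smul]⟩
        · refine ⟨(-r) * b, (-r) * a, mul_nonneg (neg_nonneg.2 hr) hb,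
            mul_nonneg (neg_nonneg.2 hr) ha, t, ht, s, hs, ?_⟩
          rw [smul_sub, smul_smul, smul_smul, neg_mul, neg_mul, neg_smul, neg_smul]
          abel }
  have hW : Submodule.span ℝ S ≤ W := by
    rw [Submodule.span_le]
    exact fun s hs => ⟨1, 0, zero_le_one, le_rfl, s, hs, 0, h0, by simp⟩
  exact hW hx

theorem pairing_nondeg {V : Type*} [AddCommGroup V] [Module ℝ V]
    (p : U →ₗ[ℝ] V →ₗ[ℝ] ℝ) {S : Set U} {E : Set V}
    (hconv : Convex ℝ S) (h0 : (0 : U) ∈ S)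
    (tomo : ∀ s ∈ S, ∀ s' ∈ S, (∀ e ∈ E, p s e = p s' e) → s = s') :
    ∀ x ∈ Submodule.span ℝ S, (∀ e ∈ E, p x e = 0) → x = 0 := by
  intro x hx hpe
  obtain ⟨a, b, ha, hb, s, hs, t, ht, rfl⟩ := span_decomp hconv h0 hx
  have hmem : ∀ r : ℝ, 0 ≤ r → r ≤ 1 → ∀ z ∈ S, r • z ∈ S := by
    intro r hr hr1 z hz
    have := hconv h0 hz (by linarith : (0:ℝ) ≤ 1 - r) hr (by ring)
    simpa using this
  set c := max a b with hc
  by_cases hc0 : c = 0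
  · have ha0 : a = 0 := le_antisymm (hc0 ▸ le_max_left a b) ha
    have hb0 : b = 0 := le_antisymm (hc0 ▸ le_max_right a b) hb
    simp [ha0, hb0]
  · have hcpos : 0 < c := lt_of_le_of_ne (le_trans ha (le_max_left a b)) (Ne.symm hc0)
    have hu : (a / c) • s ∈ S :=
      hmem _ (div_nonneg ha hcpos.le) ((div_le_one hcpos).2 (le_max_left a b)) s hs
    have hv : (b / c) • t ∈ S :=
      hmem _ (div_nonneg hb hcpos.le) ((div_le_one hcpos).2 (le_max_right a b)) t ht
    have heq : (a / c) • s = (b / c) • t := by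
      apply tomo _ hu _ hv
      intro e he
      have h1 : a * p s e - b * p t e = 0 := by
        have := hpe e he
        simpa [map_sub, map_smul] using this
      simp only [map_smul, LinearMap.smul_apply, smul_eq_mul]
      rw [div_mul_eq_mul_div, div_mul_eq_mul_div]
      congr 1
      linarith
    have h2 : a • s = b • t := by
      have := congrArg (fun z => c • z) heq
      simpa [smul_smul, mul_div_cancel₀ a hc0, mul_div_cancel₀ b hc0] using this
    rw [h2, sub_self]

end ConeDecomp

section KeySurj

theorem key_surj {U V : Type*}
    [NormedAddCommGroup U] [NormedSpace ℝ U] [FiniteDimensional ℝ U]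
    [NormedAddCommGroup V] [NormedSpace ℝ V] [FiniteDimensional ℝ V]
    (p : U →ₗ[ℝ] V →ₗ[ℝ] ℝ) (S : Set U) (E : Set V)
    (hS : IsCompact S) (hE : ∃ R, ∀ d ∈ E, ‖d‖ ≤ R)
    (ι : U →ₗ[ℝ] U) (κ : V →ₗ[ℝ] V)
    (hιS : ∀ s ∈ S, ι s ∈ S) (hκE : ∀ d ∈ E, κ d ∈ E)
    (hp : ∀ s ∈ S, ∀ d ∈ E, p (ι s) (κ d) = p s d)
    (hnd : ∀ x ∈ Submodule.span ℝ S, (∀ d ∈ E, p x d = 0) → x = 0) :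
    Set.SurjOn ι S S := by
  classical
  set A : Submodule ℝ U := Submodule.span ℝ S with hA
  have hSA : S ⊆ (A : Set U) := Submodule.subset_span
  have hιA : ∀ x ∈ A, ι x ∈ A := by
    intro x hx
    have hmap : A.map ι ≤ A := by
      rw [hA, Submodule.map_span, Submodule.span_le]
      rintro y ⟨s, hs, rfl⟩
      exact Submodule.subset_span (hιS s hs)
    exact hmap (Submodule.mem_map_of_mem hx)
  have hpA : ∀ x ∈ A, ∀ d ∈ E, p (ι x) (κ d) = p x d := by
    intro x hx d hd
    have hker : A ≤ LinearMap.ker ((p.flip (κ d)).comp ι - p.flip d) := by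
      rw [hA, Submodule.span_le]
      intro s hs
      have h1 : p (ι s) (κ d) = p s d := hp s hs d hd
      simp only [SetLike.mem_coe, LinearMap.mem_ker, LinearMap.sub_apply, LinearMap.comp_apply,
        LinearMap.flip_apply, h1, sub_self]
    have := hker hx
    simpa [LinearMap.mem_ker, LinearMap.sub_apply, LinearMap.comp_apply, LinearMap.flip_apply,
      sub_eq_zero] using this
  have hκE_it : ∀ n, ∀ d ∈ E, κ^[n] d ∈ E := by
    intro n
    induction n with
    | zero => intro d hd; simpa using hd
    | succ n ih => intro d hd; rw [Function.iterate_succ_apply]; exact ih _ (hκE d hd)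
  have hιS_it : ∀ n, ∀ s ∈ S, ι^[n] s ∈ S := by
    intro n
    induction n with
    | zero => intro s hs; simpa using hs
    | succ n ih => intro s hs; rw [Function.iterate_succ_apply]; exact ih _ (hιS s hs)
  have hpAn : ∀ n, ∀ x ∈ A, ∀ d ∈ E, p (ι^[n] x) (κ^[n] d) = p x d := by
    intro n
    induction n with
    | zero => intro x hx d hd; simp
    | succ n ih =>
        intro x hx d hd
        rw [Function.iterate_succ_apply, Function.iterate_succ_apply,
          ih (ι x) (hιA x hx) (κ d) (hκE d hd)]
        exact hpA x hx d hd
  let e : A →ₗ[ℝ] A := ι.restrict hιA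
  have he : ∀ x : A, (e x : U) = ι (x : U) := fun x => rfl
  have hinj : Function.Injective e := by
    intro x y hxy
    have hz : ((x - y : A) : U) ∈ A := (x - y).2
    have hz0 : ι ((x - y : A) : U) = 0 := by
      have h1 : e (x - y) = 0 := by rw [map_sub, hxy, sub_self]
      have := congrArg Subtype.val h1
      simpa [he] using this
    have hzero : ((x - y : A) : U) = 0 := by
      apply hnd _ hz
      intro d hd
      rw [← hpA _ hz d hd, hz0]
      simp
    have : (x - y : A) = 0 := by exact_mod_cast hzero
    exact sub_eq_zero.mp this
  have hsurj : Function.Surjective e := LinearMap.injective_iff_surjective.mp hinj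
  let E₀ : A ≃ₗ[ℝ] A := LinearEquiv.ofBijective e ⟨hinj, hsurj⟩
  have hE₀ : ∀ x : A, ((E₀ x : A) : U) = ι (x : U) := fun x => rfl
  have hfwd : ∀ n (x : A), ((E₀^[n] x : A) : U) = ι^[n] (x : U) := by
    intro n
    induction n with
    | zero => intro x; simp
    | succ n ih =>
        intro x
        rw [Function.iterate_succ_apply, Function.iterate_succ_apply, ih (E₀ x), hE₀]
  have hLR : ∀ n (y : A), E₀^[n] (E₀.symm^[n] y) = y := fun n =>
    Function.LeftInverse.iterate E₀.apply_symm_apply n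
  obtain ⟨R₀, hR₀⟩ := hE
  set R := max R₀ 0 with hRdef
  have hRE : ∀ d ∈ E, ‖d‖ ≤ R := fun d hd => (hR₀ d hd).trans (le_max_left _ _)
  have hR0 : (0:ℝ) ≤ R := le_max_right _ _
  let q : U →ₗ[ℝ] (V →L[ℝ] ℝ) :=
    (LinearMap.toContinuousLinearMap : (V →ₗ[ℝ] ℝ) ≃ₗ[ℝ] (V →L[ℝ] ℝ)).toLinearMap.comp p
  let Q : U →L[ℝ] (V →L[ℝ] ℝ) := LinearMap.toContinuousLinearMap q
  have hQ : ∀ u v, |p u v| ≤ ‖Q‖ * ‖u‖ * ‖v‖ := by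
    intro u v
    have h1 : p u v = (Q u) v := by simp [Q, q]
    rw [h1, ← Real.norm_eq_abs]
    calc ‖(Q u) v‖ ≤ ‖Q u‖ * ‖v‖ := (Q u).le_opNorm v
      _ ≤ ‖Q‖ * ‖u‖ * ‖v‖ :=
        mul_le_mul_of_nonneg_right (Q.le_opNorm u) (norm_nonneg v)
  obtain ⟨b, hbE, hbspan, hbli⟩ := exists_linearIndependent ℝ E
  have hbfin : b.Finite := hbli.setFinite
  haveI : Fintype b := hbfin.fintype
  let T : A →ₗ[ℝ] (b → ℝ) :=
    { toFun := fun x => fun d => p (x : U) (d : V)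
      map_add' := by intro x y; funext d; simp
      map_smul' := by intro c x; funext d; simp }
  have hTker : LinearMap.ker T = ⊥ := by
    rw [LinearMap.ker_eq_bot']
    intro x hx
    have hxd : ∀ d ∈ E, p (x : U) d = 0 := by
      intro d hd
      have hd' : d ∈ Submodule.span ℝ b := by
        rw [hbspan]; exact Submodule.subset_span hd
      have hsub : Submodule.span ℝ b ≤ LinearMap.ker (p (x : U)) := by
        rw [Submodule.span_le]
        intro z hz
        have hTz : T x ⟨z, hz⟩ = 0 := by rw [hx]; rfl
        simpa [T, LinearMap.mem_ker] using hTz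
      exact hsub hd'
    have := hnd _ x.2 hxd
    exact Subtype.ext this
  obtain ⟨K, hK0, hKT⟩ := T.exists_antilipschitzWith hTker
  have hKx : ∀ x : A, ‖x‖ ≤ (K : ℝ) * ‖T x‖ := by
    intro x
    have := hKT.le_mul_dist x 0
    simpa [dist_eq_norm, map_zero] using this
  have hnormcoe : ∀ z : A, ‖(z : U)‖ = ‖z‖ := fun z => rfl
  set C := (K : ℝ) * (‖Q‖ * R) with hC
  have hC0 : 0 ≤ C := by positivity
  have hbound : ∀ n (y : A), ‖E₀.symm^[n] y‖ ≤ C * ‖y‖ := by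
    intro n y
    set x : A := E₀.symm^[n] y with hxdef
    have hxy : ι^[n] (x : U) = (y : U) := by
      rw [← hfwd n x, hxdef, hLR n y]
    have hpd : ∀ d ∈ E, |p (x : U) d| ≤ ‖Q‖ * R * ‖(y : U)‖ := by
      intro d hd
      have h1 : p (x : U) d = p (ι^[n] (x : U)) (κ^[n] d) := (hpAn n _ x.2 d hd).symm
      rw [h1, hxy]
      calc |p (y : U) (κ^[n] d)| ≤ ‖Q‖ * ‖(y : U)‖ * ‖κ^[n] d‖ := hQ _ _
        _ ≤ ‖Q‖ * ‖(y : U)‖ * R := by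
            apply mul_le_mul_of_nonneg_left (hRE _ (hκE_it n d hd))
            positivity
        _ = ‖Q‖ * R * ‖(y : U)‖ := by ring
    have hTx : ‖T x‖ ≤ ‖Q‖ * R * ‖(y : U)‖ := by
      apply (pi_norm_le_iff_of_nonneg (by positivity)).mpr
      intro d
      have := hpd (d : V) (hbE d.2)
      simpa [T, Real.norm_eq_abs] using this
    calc ‖x‖ ≤ (K : ℝ) * ‖T x‖ := hKx x
      _ ≤ (K : ℝ) * (‖Q‖ * R * ‖(y : U)‖) := by
          apply mul_le_mul_of_nonneg_left hTx (by positivity)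
      _ = C * ‖y‖ := by rw [hC, hnormcoe]; ring
  intro t htS
  have htA : t ∈ A := hSA htS
  set tA : A := ⟨t, htA⟩ with htAdef
  obtain ⟨y, hyS, φ, hφ, hconv⟩ := hS.tendsto_subseq (x := fun n => ι^[n] t)
    (fun n => hιS_it n t htS)
  set m : ℕ → ℕ := fun k => φ (k + 1) - φ k with hm
  have hm1 : ∀ k, 1 ≤ m k := fun k => Nat.sub_pos_of_lt (hφ (Nat.lt_succ_self k))
  have hφle : ∀ k, φ k + m k = φ (k + 1) := fun k =>
    Nat.add_sub_cancel' (hφ (Nat.lt_succ_self k)).le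
  have haddE : ∀ n (a c : A), E₀^[n] (a - c) = E₀^[n] a - E₀^[n] c := by
    intro n
    induction n with
    | zero => intro a c; simp
    | succ n ih =>
        intro a c
        rw [Function.iterate_succ_apply, Function.iterate_succ_apply,
          Function.iterate_succ_apply, map_sub, ih]
  have hkey : ∀ k, E₀^[m k] tA - tA = E₀.symm^[φ k] (E₀^[φ (k + 1)] tA - E₀^[φ k] tA) := by
    intro k
    apply E₀.injective.iterate (φ k)
    rw [haddE, hLR (φ k)]
    congr 1
    rw [← Function.iterate_add_apply, hφle k]
  have hnormk : ∀ k, ‖ι^[m k] t - t‖ ≤ C * ‖ι^[φ (k + 1)] t - ι^[φ k] t‖ := by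
    intro k
    have h1 : ι^[m k] t - t = ((E₀^[m k] tA - tA : A) : U) := by
      rw [AddSubgroupClass.coe_sub, hfwd]
    have h2 : ι^[φ (k + 1)] t - ι^[φ k] t = ((E₀^[φ (k + 1)] tA - E₀^[φ k] tA : A) : U) := by
      rw [AddSubgroupClass.coe_sub, hfwd, hfwd]
    rw [h1, h2, hkey k, hnormcoe, hnormcoe]
    exact hbound _ _
  have htend0 : Tendsto (fun k => ι^[φ (k + 1)] t - ι^[φ k] t) atTop (nhds 0) := by
    have h1 : Tendsto (fun k => ι^[φ (k + 1)] t) atTop (nhds y) :=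
      hconv.comp (tendsto_add_atTop_nat 1)
    have h2 : Tendsto (fun k => ι^[φ k] t) atTop (nhds y) := hconv
    simpa using h1.sub h2
  have htendmt : Tendsto (fun k => ι^[m k] t) atTop (nhds t) := by
    rw [tendsto_iff_norm_sub_tendsto_zero]
    apply squeeze_zero (fun k => norm_nonneg _) hnormk
    have := (htend0.norm).const_mul C
    simpa using this
  obtain ⟨s, hsS, ρ, hρ, hws⟩ := hS.tendsto_subseq (x := fun k => ι^[m k - 1] t)
    (fun k => hιS_it _ t htS)
  refine ⟨s, hsS, ?_⟩
  have hcont : Continuous ι := ι.continuous_of_finiteDimensional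
  have h1 : Tendsto (fun j => ι (ι^[m (ρ j) - 1] t)) atTop (nhds (ι s)) :=
    ((hcont.tendsto s).comp hws)
  have h2 : ∀ j, ι (ι^[m (ρ j) - 1] t) = ι^[m (ρ j)] t := by
    intro j
    have hmj : m (ρ j) = (m (ρ j) - 1) + 1 := (Nat.sub_add_cancel (hm1 (ρ j))).symm
    conv_rhs => rw [hmj, Function.iterate_succ_apply']
  have h3 : Tendsto (fun j => ι^[m (ρ j)] t) atTop (nhds t) :=
    htendmt.comp hρ.tendsto_atTop
  have h4 : Tendsto (fun j => ι^[m (ρ j)] t) atTop (nhds (ι s)) := by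
    have := h1
    simp only [h2] at this
    exact this
  exact tendsto_nhds_unique h4 h3

end KeySurj

/-- A GPT system: normalized states, effects, unit effect, and a tomographic
bilinear probability rule. -/
structure GPTSystem (U V : Type*) [NormedAddCommGroup U] [NormedSpace ℝ U]
    [NormedAddCommGroup V] [NormedSpace ℝ V] where
  normStates : Set U
  effects : Set V
  unit : V
  prob : U →ₗ[ℝ] V →ₗ[ℝ] ℝ
  compact_normStates : IsCompact normStates
  convex_normStates : Convex ℝ normStates
  zero_not_mem_affineSpan : (0 : U) ∉ affineSpan ℝ normStates
  compact_effects : IsCompact effects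
  convex_effects : Convex ℝ effects
  zero_mem_effects : (0 : V) ∈ effects
  unit_mem_effects : unit ∈ effects
  compl_effects : ∀ e ∈ effects, ∃ e' ∈ effects, e + e' = unit
  prob_mem_Icc : ∀ s ∈ convexHull ℝ (insert 0 normStates), ∀ e ∈ effects,
    prob s e ∈ Set.Icc (0 : ℝ) 1
  prob_unit : ∀ s ∈ normStates, prob s unit = 1
  tomo_states : ∀ s ∈ convexHull ℝ (insert 0 normStates),
    ∀ s' ∈ convexHull ℝ (insert 0 normStates),
    (∀ e ∈ effects, prob s e = prob s' e) → s = s'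
  tomo_effects : ∀ e ∈ effects, ∀ e' ∈ effects,
    (∀ s ∈ convexHull ℝ (insert 0 normStates), prob s e = prob s e') → e = e'

/-- The (full, subnormalized) state space of a GPT system. -/
def GPTSystem.states {U V : Type*} [NormedAddCommGroup U] [NormedSpace ℝ U]
    [NormedAddCommGroup V] [NormedSpace ℝ V] (G : GPTSystem U V) : Set U :=
  convexHull ℝ (insert 0 G.normStates)

section GPTLemmas

variable {U V : Type*} [NormedAddCommGroup U] [NormedSpace ℝ U]
  [NormedAddCommGroup V] [NormedSpace ℝ V]

theorem GPTSystem.zero_mem_states (F : GPTSystem U V) : (0 : U) ∈ F.states :=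
  subset_convexHull ℝ _ (Set.mem_insert 0 _)

theorem GPTSystem.convex_states (F : GPTSystem U V) : Convex ℝ F.states :=
  convex_convexHull ℝ _

theorem GPTSystem.isCompact_states (F : GPTSystem U V) : IsCompact F.states := by
  rcases F.normStates.eq_empty_or_nonempty with h | h
  · have hst : F.states = {0} := by
      rw [GPTSystem.states, h]
      simp
    rw [hst]
    exact isCompact_singleton
  · have heq : F.states = (fun pr : ℝ × U => pr.1 • pr.2) '' (Set.Icc (0:ℝ) 1 ×ˢ F.normStates) := by
      rw [GPTSystem.states, convexHull_insert h, F.convex_normStates.convexHull_eq]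
      ext x
      simp only [mem_convexJoin, Set.mem_singleton_iff, Set.mem_image, Set.mem_prod, Set.mem_Icc,
        Prod.exists]
      constructor
      · rintro ⟨a, rfl, z, hz, hseg⟩
        rw [segment_eq_image] at hseg
        obtain ⟨θ, hθ, hx⟩ := hseg
        refine ⟨θ, z, ⟨hθ, hz⟩, ?_⟩
        simpa using hx
      · rintro ⟨c, z, ⟨⟨hc0, hc1⟩, hz⟩, rfl⟩
        refine ⟨0, rfl, z, hz, ?_⟩
        rw [segment_eq_image]
        exact ⟨c, ⟨hc0, hc1⟩, by simp⟩
    rw [heq]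
    exact (isCompact_Icc.prod F.compact_normStates).image (continuous_fst.smul continuous_snd)

theorem GPTSystem.nondeg_states (F : GPTSystem U V) :
    ∀ x ∈ Submodule.span ℝ F.states, (∀ e ∈ F.effects, F.prob x e = 0) → x = 0 :=
  pairing_nondeg F.prob F.convex_states F.zero_mem_states F.tomo_states

theorem GPTSystem.nondeg_effects (F : GPTSystem U V) :
    ∀ x ∈ Submodule.span ℝ F.effects, (∀ s ∈ F.states, F.prob.flip x s = 0) → x = 0 := by
  apply pairing_nondeg F.prob.flip F.convex_effects F.zero_mem_effects
  intro e he e' he' hpr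
  exact F.tomo_effects e he e' he' fun s hs => by
    simpa [LinearMap.flip_apply] using hpr s hs

end GPTLemmas

/-- Two GPT systems that are GPT subsystems of each other are equivalent:
both embeddings are invertible (bijections between state and effect spaces). -/
theorem stmt9
    {U₁ V₁ U₂ V₂ : Type*}
    [NormedAddCommGroup U₁] [NormedSpace ℝ U₁] [FiniteDimensional ℝ U₁]
    [NormedAddCommGroup V₁] [NormedSpace ℝ V₁] [FiniteDimensional ℝ V₁]
    [NormedAddCommGroup U₂] [NormedSpace ℝ U₂] [FiniteDimensional ℝ U₂]
    [NormedAddCommGroup V₂] [NormedSpace ℝ V₂] [FiniteDimensional ℝ V₂]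
    (F : GPTSystem U₁ V₁) (G : GPTSystem U₂ V₂)
    (ι₁ : U₁ →ₗ[ℝ] U₂) (κ₁ : V₁ →ₗ[ℝ] V₂)
    (ι₂ : U₂ →ₗ[ℝ] U₁) (κ₂ : V₂ →ₗ[ℝ] V₁)
    (hι₁ : ι₁ '' F.states ⊆ G.states) (hκ₁ : κ₁ '' F.effects ⊆ G.effects)
    (hκ₁u : κ₁ F.unit = G.unit)
    (hp₁ : ∀ s ∈ F.states, ∀ e ∈ F.effects, G.prob (ι₁ s) (κ₁ e) = F.prob s e)
    (hι₂ : ι₂ '' G.states ⊆ F.states) (hκ₂ : κ₂ '' G.effects ⊆ F.effects)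
    (hκ₂u : κ₂ G.unit = F.unit)
    (hp₂ : ∀ s ∈ G.states, ∀ e ∈ G.effects, F.prob (ι₂ s) (κ₂ e) = G.prob s e) :
    Set.BijOn ι₁ F.states G.states ∧ Set.BijOn κ₁ F.effects G.effects ∧
    Set.BijOn ι₂ G.states F.states ∧ Set.BijOn κ₂ G.effects F.effects := by
  -- basic membership maps
  have hι₁m : ∀ s ∈ F.states, ι₁ s ∈ G.states := fun s hs => hι₁ ⟨s, hs, rfl⟩
  have hκ₁m : ∀ e ∈ F.effects, κ₁ e ∈ G.effects := fun e he => hκ₁ ⟨e, he, rfl⟩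
  have hι₂m : ∀ s ∈ G.states, ι₂ s ∈ F.states := fun s hs => hι₂ ⟨s, hs, rfl⟩
  have hκ₂m : ∀ e ∈ G.effects, κ₂ e ∈ F.effects := fun e he => hκ₂ ⟨e, he, rfl⟩
  -- boundedness
  have hFsB : ∃ R, ∀ d ∈ F.states, ‖d‖ ≤ R :=
    isBounded_iff_forall_norm_le.mp F.isCompact_states.isBounded
  have hFeB : ∃ R, ∀ d ∈ F.effects, ‖d‖ ≤ R :=
    isBounded_iff_forall_norm_le.mp F.compact_effects.isBounded
  have hGsB : ∃ R, ∀ d ∈ G.states, ‖d‖ ≤ R :=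
    isBounded_iff_forall_norm_le.mp G.isCompact_states.isBounded
  have hGeB : ∃ R, ∀ d ∈ G.effects, ‖d‖ ≤ R :=
    isBounded_iff_forall_norm_le.mp G.compact_effects.isBounded
  -- pairing preservation for the composite self-embeddings
  have hpF : ∀ s ∈ F.states, ∀ e ∈ F.effects,
      F.prob ((ι₂ ∘ₗ ι₁) s) ((κ₂ ∘ₗ κ₁) e) = F.prob s e := by
    intro s hs e he
    have := hp₂ (ι₁ s) (hι₁m s hs) (κ₁ e) (hκ₁m e he)
    simp only [LinearMap.comp_apply]
    rw [this, hp₁ s hs e he]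
  have hpG : ∀ s ∈ G.states, ∀ e ∈ G.effects,
      G.prob ((ι₁ ∘ₗ ι₂) s) ((κ₁ ∘ₗ κ₂) e) = G.prob s e := by
    intro s hs e he
    have := hp₁ (ι₂ s) (hι₂m s hs) (κ₂ e) (hκ₂m e he)
    simp only [LinearMap.comp_apply]
    rw [this, hp₂ s hs e he]
  -- surjectivity of composite self-embeddings (states)
  have hsurjF : Set.SurjOn (ι₂ ∘ₗ ι₁) F.states F.states :=
    key_surj F.prob F.states F.effects F.isCompact_states hFeB (ι₂ ∘ₗ ι₁) (κ₂ ∘ₗ κ₁)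
      (fun s hs => hι₂m _ (hι₁m s hs)) (fun e he => hκ₂m _ (hκ₁m e he)) hpF F.nondeg_states
  have hsurjG : Set.SurjOn (ι₁ ∘ₗ ι₂) G.states G.states :=
    key_surj G.prob G.states G.effects G.isCompact_states hGeB (ι₁ ∘ₗ ι₂) (κ₁ ∘ₗ κ₂)
      (fun s hs => hι₁m _ (hι₂m s hs)) (fun e he => hκ₁m _ (hκ₂m e he)) hpG G.nondeg_states
  -- surjectivity of composite self-embeddings (effects)
  have hpFe : ∀ e ∈ F.effects, ∀ s ∈ F.states,
      F.prob.flip ((κ₂ ∘ₗ κ₁) e) ((ι₂ ∘ₗ ι₁) s) = F.prob.flip e s := by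
    intro e he s hs
    simpa [LinearMap.flip_apply] using hpF s hs e he
  have hpGe : ∀ e ∈ G.effects, ∀ s ∈ G.states,
      G.prob.flip ((κ₁ ∘ₗ κ₂) e) ((ι₁ ∘ₗ ι₂) s) = G.prob.flip e s := by
    intro e he s hs
    simpa [LinearMap.flip_apply] using hpG s hs e he
  have hsurjFe : Set.SurjOn (κ₂ ∘ₗ κ₁) F.effects F.effects :=
    key_surj F.prob.flip F.effects F.states F.compact_effects hFsB (κ₂ ∘ₗ κ₁) (ι₂ ∘ₗ ι₁)
      (fun e he => hκ₂m _ (hκ₁m e he)) (fun s hs => hι₂m _ (hι₁m s hs)) hpFe F.nondeg_effects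
  have hsurjGe : Set.SurjOn (κ₁ ∘ₗ κ₂) G.effects G.effects :=
    key_surj G.prob.flip G.effects G.states G.compact_effects hGsB (κ₁ ∘ₗ κ₂) (ι₁ ∘ₗ ι₂)
      (fun e he => hκ₁m _ (hκ₂m e he)) (fun s hs => hι₁m _ (hι₂m s hs)) hpGe G.nondeg_effects
  refine ⟨⟨hι₁m, ?_, ?_⟩, ⟨hκ₁m, ?_, ?_⟩, ⟨hι₂m, ?_, ?_⟩, ⟨hκ₂m, ?_, ?_⟩⟩
  · -- InjOn ι₁
    intro s hs s' hs' hss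
    exact F.tomo_states s hs s' hs' fun e he => by
      rw [← hp₁ s hs e he, ← hp₁ s' hs' e he, hss]
  · -- SurjOn ι₁
    intro t ht
    obtain ⟨s₀, hs₀, hs₀t⟩ := hsurjG ht
    exact ⟨ι₂ s₀, hι₂m s₀ hs₀, hs₀t⟩
  · -- InjOn κ₁
    intro e he e' he' hee
    exact F.tomo_effects e he e' he' fun s hs => by
      rw [← hp₁ s hs e he, ← hp₁ s hs e' he', hee]
  · -- SurjOn κ₁
    intro f hf
    obtain ⟨e₀, he₀, he₀f⟩ := hsurjGe hf
    exact ⟨κ₂ e₀, hκ₂m e₀ he₀, he₀f⟩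
  · -- InjOn ι₂
    intro s hs s' hs' hss
    exact G.tomo_states s hs s' hs' fun e he => by
      rw [← hp₂ s hs e he, ← hp₂ s' hs' e he, hss]
  · -- SurjOn ι₂
    intro t ht
    obtain ⟨s₀, hs₀, hs₀t⟩ := hsurjF ht
    exact ⟨ι₁ s₀, hι₁m s₀ hs₀, hs₀t⟩
  · -- InjOn κ₂
    intro e he e' he' hee
    exact G.tomo_effects e he e' he' fun s hs => by
      rw [← hp₂ s hs e he, ← hp₂ s hs e' he', hee]
  · -- SurjOn κ₂
    intro f hf
    obtain ⟨e₀, he₀, he₀f⟩ := hsurjFe hf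
    exact ⟨κ₁ e₀, hκ₁m e₀ he₀, he₀f⟩
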